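/- Let Θ* ∈ ([−M,M]^p)^k satisfy ∫ f_{Θ*} dP ≤ ∫ f_Θ dP for all Θ ∈ (ℝ^p)^k, and let Θ̂_n : Ω → ([−M,M]^p)^k be measurable maps such that, almost surely, Θ̂_n minimizes Θ ↦ (1/n) Σ_{i=1}^n f_Θ(X_i) over ([−M,M]^p)^k. Then the excess risk is √n-consistent: for every δ ∈ (0,1) there exist a constant C > 0 and an integer N such that for all n ≥ N, ℙ( √n · ( ∫ f_{Θ̂_n} dP − ∫ f_{Θ*} dP ) ≤ C ) ≥ 1 − δ; that is, |∫ f_{Θ̂_n} dP − ∫ f_{Θ*} dP| = O_P(n^{−1/2}). -/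

import Mathlib

open MeasureTheory ProbabilityTheory Real Filter
open scoped ENNReal
set_option maxHeartbeats 4000000

/-- Bregman divergence generated by a differentiable function `φ`. -/
noncomputable def dphi {p : ℕ} (φ : EuclideanSpace ℝ (Fin p) → ℝ)
    (x y : EuclideanSpace ℝ (Fin p)) : ℝ :=
  φ x - φ y - inner ℝ (gradient φ y) (x - y)

/-- The cube `[-M, M]^p` in `ℝ^p`. -/
def cube (p : ℕ) (M : ℝ) : Set (EuclideanSpace ℝ (Fin p)) := {x | ∀ i, |x i| ≤ M}

/-- The clustering objective `f_Θ(x) = Ψ(d_φ(x,θ₁),…,d_φ(x,θ_k))`. -/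
noncomputable def fTheta {p k : ℕ} (φ : EuclideanSpace ℝ (Fin p) → ℝ)
    (Ψ : (Fin k → ℝ) → ℝ) (Θ : Fin k → EuclideanSpace ℝ (Fin p))
    (x : EuclideanSpace ℝ (Fin p)) : ℝ :=
  Ψ (fun j => dphi φ x (Θ j))

theorem measurableSet_cube (p : ℕ) (M : ℝ) : MeasurableSet (cube p M) := by
  have : cube p M = ⋂ i, {x : EuclideanSpace ℝ (Fin p) | |x i| ≤ M} := by
    ext x; simp [cube]
  rw [this]
  refine MeasurableSet.iInter fun i => ?_
  have hc : Continuous fun x : EuclideanSpace ℝ (Fin p) => x i :=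
    (continuous_apply i).comp (PiLp.continuous_ofLp (p := 2) (β := fun _ : Fin p => ℝ))
  exact (isClosed_le hc.abs continuous_const).measurableSet

theorem norm_le_sqrt_mul {p : ℕ} {a : ℝ} (ha : 0 ≤ a) {v : EuclideanSpace ℝ (Fin p)}
    (h : ∀ i, |v i| ≤ a) : ‖v‖ ≤ Real.sqrt p * a := by
  rw [EuclideanSpace.norm_eq]
  calc Real.sqrt (∑ i, ‖v i‖ ^ 2) ≤ Real.sqrt (∑ _i : Fin p, a ^ 2) := by
        apply Real.sqrt_le_sqrt
        apply Finset.sum_le_sum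
        intro i _
        have := h i
        rw [Real.norm_eq_abs]
        nlinarith [abs_nonneg (v i)]
    _ = Real.sqrt p * a := by
        rw [Finset.sum_const, Finset.card_univ, Fintype.card_fin, nsmul_eq_mul,
          Real.sqrt_mul (by positivity), Real.sqrt_sq ha]


theorem dphi_nonneg {p : ℕ} {φ : EuclideanSpace ℝ (Fin p) → ℝ}
    (hφconv : ConvexOn ℝ Set.univ φ) (hφdiff : Differentiable ℝ φ)
    (x y : EuclideanSpace ℝ (Fin p)) : 0 ≤ dphi φ x y := by
  set v := x - y with hv
  have h2 : HasDerivAt (fun t : ℝ => φ (y + t • v)) (inner ℝ (gradient φ y) v) 0 := by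
    have h1 : HasFDerivAt φ (InnerProductSpace.toDual ℝ _ (gradient φ y)) (y + (0:ℝ) • v) := by
      simpa using (hφdiff y).hasGradientAt.hasFDerivAt
    have h2 : HasDerivAt (fun t : ℝ => y + t • v) v 0 := by
      simpa using ((hasDerivAt_id (0:ℝ)).smul_const v).const_add y
    have h3 := h1.comp_hasDerivAt 0 h2
    simp only [InnerProductSpace.toDual_apply_apply] at h3
    exact h3
  have hconv : ConvexOn ℝ Set.univ (fun t : ℝ => φ (y + t • v)) := by
    have := hφconv.comp_affineMap (AffineMap.lineMap y x : ℝ →ᵃ[ℝ] _)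
    simp only [Set.preimage_univ] at this
    refine this.congr fun t _ => ?_
    simp [AffineMap.lineMap_apply, hv]
    abel
  have hle : inner ℝ (gradient φ y) v ≤ (fun t : ℝ => φ (y + t • v)) 1 - (fun t : ℝ => φ (y + t • v)) 0 := by
    have := hconv.le_slope_of_hasDerivAt (Set.mem_univ 0) (Set.mem_univ 1) one_pos h2
    simpa [slope_def_field] using this
  simp only [one_smul, zero_smul, add_zero] at hle
  have : y + v = x := by rw [hv]; abel
  rw [this] at hle
  simp only [dphi]
  linarith


theorem exp_quad {x : ℝ} (h : |x| ≤ 1) : Real.exp x ≤ 1 + x + x ^ 2 := by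
  have hb := Real.exp_bound h (n := 2) (by norm_num)
  have h2 : ∑ m ∈ Finset.range 2, x ^ m / m.factorial = 1 + x := by
    simp [Finset.sum_range_succ]
  rw [h2] at hb
  have h4 : ((2 : ℕ).succ : ℝ) / (((2 : ℕ).factorial : ℝ) * (2 : ℕ)) = 3 / 4 := by
    norm_num [Nat.factorial]
  rw [h4, sq_abs] at hb
  have := (abs_sub_le_iff.1 hb).1
  nlinarith [sq_nonneg x]

section GenProb
variable {Ω : Type*} [MeasurableSpace Ω] {μ : Measure Ω} [IsProbabilityMeasure μ]

theorem integrable_exp_of_bdd {Z : Ω → ℝ} (hZ : Measurable Z) {c t : ℝ}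
    (hbd : ∀ᵐ ω ∂μ, |Z ω| ≤ c) : Integrable (fun ω => Real.exp (t * Z ω)) μ := by
  refine Integrable.mono' (integrable_const (Real.exp (|t| * c))) ?_ ?_
  · exact ((hZ.const_mul t).exp).aestronglyMeasurable
  · filter_upwards [hbd] with ω hω
    rw [Real.norm_eq_abs, abs_of_pos (Real.exp_pos _), Real.exp_le_exp]
    calc t * Z ω ≤ |t * Z ω| := le_abs_self _
      _ = |t| * |Z ω| := abs_mul _ _
      _ ≤ |t| * c := by
          apply mul_le_mul_of_nonneg_left hω (abs_nonneg t)

theorem mgf_le_of_bdd {Z : Ω → ℝ} (hZ : Measurable Z) (hmean : ∫ ω, Z ω ∂μ = 0)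
    {c t : ℝ} (hc : 0 < c) (hbd : ∀ᵐ ω ∂μ, |Z ω| ≤ c) (ht : |t| * c ≤ 1) :
    mgf Z μ t ≤ Real.exp (t ^ 2 * c ^ 2) := by
  have hint : Integrable (fun ω => Real.exp (t * Z ω)) μ := integrable_exp_of_bdd hZ hbd
  have hZint : Integrable Z μ := by
    refine Integrable.mono' (integrable_const c) hZ.aestronglyMeasurable ?_
    filter_upwards [hbd] with ω hω; rwa [Real.norm_eq_abs]
  have hptwise : ∀ᵐ ω ∂μ, Real.exp (t * Z ω) ≤ 1 + t * Z ω + t ^ 2 * c ^ 2 := by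
    filter_upwards [hbd] with ω hω
    have h1 : |t * Z ω| ≤ 1 := by
      rw [abs_mul]
      calc |t| * |Z ω| ≤ |t| * c := mul_le_mul_of_nonneg_left hω (abs_nonneg t)
        _ ≤ 1 := ht
    calc Real.exp (t * Z ω) ≤ 1 + t * Z ω + (t * Z ω) ^ 2 := exp_quad h1
      _ ≤ 1 + t * Z ω + t ^ 2 * c ^ 2 := by
          have : (t * Z ω) ^ 2 ≤ t ^ 2 * c ^ 2 := by
            rw [mul_pow]
            apply mul_le_mul_of_nonneg_left _ (sq_nonneg t)
            rw [← sq_abs]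
            exact pow_le_pow_left₀ (abs_nonneg _) hω 2
          linarith
  have hintrhs : Integrable (fun ω => 1 + t * Z ω + t ^ 2 * c ^ 2) μ := by
    exact (((integrable_const 1).add (hZint.const_mul t)).add (integrable_const _))
  calc mgf Z μ t = ∫ ω, Real.exp (t * Z ω) ∂μ := rfl
    _ ≤ ∫ ω, (1 + t * Z ω + t ^ 2 * c ^ 2) ∂μ := integral_mono_ae hint hintrhs hptwise
    _ = 1 + t * (∫ ω, Z ω ∂μ) + t ^ 2 * c ^ 2 := by
        have e1 : Integrable (fun ω => 1 + t * Z ω) μ :=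
          ((integrable_const (1:ℝ)).add (hZint.const_mul t) :)
        rw [integral_add e1 (integrable_const _),
          integral_add (integrable_const (1:ℝ)) (hZint.const_mul t)]
        simp [MeasureTheory.integral_const_mul]
    _ = 1 + t ^ 2 * c ^ 2 := by rw [hmean]; ring
    _ ≤ Real.exp (t ^ 2 * c ^ 2) := by
        have := Real.add_one_le_exp (t ^ 2 * c ^ 2); linarith

theorem sum_tail {Z : ℕ → Ω → ℝ}
    (hind : iIndepFun Z μ) (hmeas : ∀ i, Measurable (Z i))
    (hmean : ∀ i, ∫ ω, Z i ω ∂μ = 0) {c : ℝ} (hc : 0 < c)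
    (hbd : ∀ i, ∀ᵐ ω ∂μ, |Z i ω| ≤ c) {n : ℕ} {s : ℝ} (hs : 0 ≤ s) :
    μ {ω | (n : ℝ) * s ≤ ∑ i ∈ Finset.range n, Z i ω}
      ≤ ENNReal.ofReal (Real.exp (-((n : ℝ) * s ^ 2) / (4 * c ^ 2))) := by
  rcases Nat.eq_zero_or_pos n with hn | hn
  · subst hn
    simp only [Nat.cast_zero, zero_mul, neg_zero, zero_div, Real.exp_zero, ENNReal.ofReal_one]
    exact prob_le_one
  rcases le_or_gt s (2 * c) with hs2 | hs2
  · -- Chernoff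
    set t : ℝ := s / (2 * c ^ 2) with htdef
    have ht0 : 0 ≤ t := by positivity
    have htc : |t| * c ≤ 1 := by
      rw [abs_of_nonneg ht0, htdef]
      rw [div_mul_eq_mul_div, div_le_one (by positivity)]
      nlinarith
    have hmgf : ∀ i, mgf (Z i) μ t ≤ Real.exp (t ^ 2 * c ^ 2) := fun i =>
      mgf_le_of_bdd (hmeas i) (hmean i) hc (hbd i) htc
    have hint : ∀ i ∈ Finset.range n, Integrable (fun ω => Real.exp (t * Z i ω)) μ :=
      fun i _ => integrable_exp_of_bdd (hmeas i) (hbd i)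
    have hintsum : Integrable (fun ω => Real.exp (t * (∑ i ∈ Finset.range n, Z i) ω)) μ :=
      hind.integrable_exp_mul_sum hmeas hint
    have hch := measure_ge_le_exp_mul_mgf (μ := μ) (X := ∑ i ∈ Finset.range n, Z i)
      ((n : ℝ) * s) ht0 hintsum
    have hmgfsum : mgf (∑ i ∈ Finset.range n, Z i) μ t ≤ Real.exp ((n : ℝ) * (t ^ 2 * c ^ 2)) := by
      rw [hind.mgf_sum hmeas]
      calc ∏ i ∈ Finset.range n, mgf (Z i) μ t
          ≤ ∏ _i ∈ Finset.range n, Real.exp (t ^ 2 * c ^ 2) :=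
            Finset.prod_le_prod (fun i _ => mgf_nonneg) (fun i _ => hmgf i)
        _ = Real.exp ((n : ℝ) * (t ^ 2 * c ^ 2)) := by
            rw [Finset.prod_const, Finset.card_range, ← Real.exp_nat_mul]
    have hbound : Real.exp (-t * ((n : ℝ) * s)) * Real.exp ((n : ℝ) * (t ^ 2 * c ^ 2))
        ≤ Real.exp (-((n : ℝ) * s ^ 2) / (4 * c ^ 2)) := by
      rw [← Real.exp_add, Real.exp_le_exp]
      apply le_of_eq
      have hc2 : (c : ℝ) ^ 2 ≠ 0 := by positivity
      rw [htdef]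
      field_simp
      ring
    have hset : {ω | (n : ℝ) * s ≤ ∑ i ∈ Finset.range n, Z i ω}
        = {ω | (n : ℝ) * s ≤ (∑ i ∈ Finset.range n, Z i) ω} := by
      ext ω; simp [Finset.sum_apply]
    rw [hset]
    have htoReal := le_trans hch (by
      calc Real.exp (-t * ((n : ℝ) * s)) * mgf (∑ i ∈ Finset.range n, Z i) μ t
          ≤ Real.exp (-t * ((n : ℝ) * s)) * Real.exp ((n : ℝ) * (t ^ 2 * c ^ 2)) := by
            apply mul_le_mul_of_nonneg_left hmgfsum (Real.exp_pos _).le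
        _ ≤ Real.exp (-((n : ℝ) * s ^ 2) / (4 * c ^ 2)) := hbound)
    calc μ {ω | (n : ℝ) * s ≤ (∑ i ∈ Finset.range n, Z i) ω}
        = ENNReal.ofReal (μ {ω | (n : ℝ) * s ≤ (∑ i ∈ Finset.range n, Z i) ω}).toReal := by
          rw [ENNReal.ofReal_toReal (measure_ne_top _ _)]
      _ ≤ ENNReal.ofReal (Real.exp (-((n : ℝ) * s ^ 2) / (4 * c ^ 2))) :=
          ENNReal.ofReal_le_ofReal htoReal
  · -- event is null
    have hae : ∀ᵐ ω ∂μ, ∀ i : ℕ, i ∈ Finset.range n → |Z i ω| ≤ c := by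
      rw [ae_all_iff]
      intro i
      exact (hbd i).mono fun ω h _ => h
    have hnull : ∀ᵐ ω ∂μ, ¬((n : ℝ) * s ≤ ∑ i ∈ Finset.range n, Z i ω) := by
      filter_upwards [hae] with ω hω
      have h1 : ∑ i ∈ Finset.range n, Z i ω ≤ (n : ℝ) * c := by
        calc ∑ i ∈ Finset.range n, Z i ω ≤ ∑ _i ∈ Finset.range n, c :=
              Finset.sum_le_sum fun i hi => le_trans (le_abs_self _) (hω i hi)
          _ = (n : ℝ) * c := by rw [Finset.sum_const, Finset.card_range, nsmul_eq_mul]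
      have hnpos : (0 : ℝ) < n := Nat.cast_pos.2 hn
      push_neg
      nlinarith
    have : μ {ω | (n : ℝ) * s ≤ ∑ i ∈ Finset.range n, Z i ω} = 0 :=
      measure_eq_zero_iff_ae_notMem.mpr hnull
    rw [this]
    positivity

end GenProb

noncomputable def grid1 (M : ℝ) (m : ℕ) : Finset ℝ :=
  (Finset.range (2 ^ m)).image fun i : ℕ => -M + (2 * i + 1) * M / 2 ^ m

theorem grid1_card (M : ℝ) (m : ℕ) : (grid1 M m).card ≤ 2 ^ m :=
  le_trans (Finset.card_image_le) (le_of_eq (Finset.card_range _))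

theorem grid1_mem_abs {M : ℝ} (hM : 0 < M) {m : ℕ} {y : ℝ} (hy : y ∈ grid1 M m) : |y| ≤ M := by
  rcases Finset.mem_image.1 hy with ⟨i, hi, rfl⟩
  rw [Finset.mem_range] at hi
  have h1 : (0:ℝ) < 2 ^ m := by positivity
  have h2 : (i:ℝ) ≤ 2 ^ m - 1 := by
    have : (i:ℝ) + 1 ≤ ((2:ℝ)) ^ m := by exact_mod_cast Nat.succ_le_of_lt hi
    linarith
  have h3 : (0:ℝ) ≤ (i:ℝ) := Nat.cast_nonneg i
  rw [abs_le]
  constructor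
  · have : (0:ℝ) < (2 * i + 1) * M / 2 ^ m := by positivity
    linarith
  · have h4 : (2 * (i:ℝ) + 1) * M / 2 ^ m ≤ 2 * M := by
      rw [div_le_iff₀ h1]
      nlinarith
    linarith

theorem grid1_cover {M : ℝ} (hM : 0 < M) (m : ℕ) {c : ℝ} (hc : |c| ≤ M) :
    ∃ y ∈ grid1 M m, |c - y| ≤ M / 2 ^ m := by
  have h1 : (0:ℝ) < 2 ^ m := by positivity
  set r : ℕ := 2 ^ m with hr
  have hrpos : 0 < r := Nat.pow_pos (by norm_num)
  set w : ℝ := (c + M) * r / (2 * M) with hw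
  have hw0 : 0 ≤ w := by
    have := (abs_le.1 hc).1
    apply div_nonneg _ (by linarith)
    have : (0:ℝ) ≤ c + M := by linarith
    positivity
  set i : ℕ := min ⌊w⌋₊ (r - 1) with hi
  have hui : i ∈ Finset.range r := by
    rw [Finset.mem_range]
    have : i ≤ r - 1 := min_le_right _ _
    omega
  refine ⟨-M + (2 * i + 1) * M / 2 ^ m, Finset.mem_image.2 ⟨i, by rwa [hr] at hui, rfl⟩, ?_⟩
  have hiw : (i : ℝ) ≤ w := by
    refine le_trans ?_ (Nat.floor_le hw0)
    exact_mod_cast Nat.cast_le.2 (min_le_left _ _)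
  have hwi : w ≤ (i : ℝ) + 1 := by
    rcases le_or_gt (⌊w⌋₊) (r - 1) with h | h
    · have : i = ⌊w⌋₊ := min_eq_left h
      rw [this]
      exact (Nat.lt_floor_add_one w).le
    · have hieq : i = r - 1 := min_eq_right h.le
      have hwr : w ≤ r := by
        rw [hw, div_le_iff₀ (by linarith)]
        have := (abs_le.1 hc).2
        nlinarith [(Nat.cast_pos (α := ℝ)).2 hrpos]
      rw [hieq]
      have : ((r:ℝ) - 1) + 1 = r := by ring
      have hcast : ((r - 1 : ℕ) : ℝ) = (r:ℝ) - 1 := by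
        have : 1 ≤ r := hrpos
        push_cast [Nat.cast_sub this]
        ring
      rw [hcast]
      linarith
  have hceq : c - (-M + (2 * i + 1) * M / 2 ^ m) = (M / 2 ^ m) * (2 * w - 2 * i - 1) := by
    have hM2 : (2 * M) ≠ 0 := by linarith
    have hrr : ((r:ℝ)) = 2 ^ m := by rw [hr]; push_cast; ring
    rw [hw, hrr]
    field_simp
    ring
  rw [hceq, abs_mul, abs_of_pos (by positivity : (0:ℝ) < M / 2 ^ m)]
  have : |2 * w - 2 * i - 1| ≤ 1 := by
    rw [abs_le]; constructor <;> linarith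
  nlinarith [div_pos hM h1]

-- series bounds
theorem ser1 (n : ℕ) : ∑ m ∈ Finset.range n, ((m:ℝ) + 1) * (1/2) ^ (m+1) ≤ 2 := by
  have key : ∀ n : ℕ, ∑ m ∈ Finset.range n, ((m:ℝ) + 1) * (1/2) ^ (m+1)
      = 2 - ((n:ℝ) + 2) * (1/2) ^ n := by
    intro n
    induction n with
    | zero => norm_num
    | succ n ih =>
      rw [Finset.sum_range_succ, ih]
      push_cast
      ring
  rw [key]
  have : (0:ℝ) ≤ ((n:ℝ) + 2) * (1/2) ^ n := by positivity
  linarith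

theorem ser2 (n : ℕ) : ∑ m ∈ Finset.range n, ((1:ℝ)/2) ^ (m+1) ≤ 1 := by
  have key : ∀ n : ℕ, ∑ m ∈ Finset.range n, ((1:ℝ)/2) ^ (m+1) = 1 - (1/2) ^ n := by
    intro n
    induction n with
    | zero => norm_num
    | succ n ih => rw [Finset.sum_range_succ, ih]; ring
  rw [key]
  have : (0:ℝ) ≤ (1/2:ℝ) ^ n := by positivity
  linarith

theorem exp_neg_le (m : ℕ) : Real.exp (-((m:ℝ)+1)) ≤ (1/2) ^ (m+1) := by
  have h2e : (2:ℝ) ≤ Real.exp 1 := by have := Real.add_one_le_exp 1; linarith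
  rw [Real.exp_neg]
  rw [show ((m:ℝ) + 1) = ((m + 1 : ℕ) : ℝ) by push_cast; ring]
  rw [← Real.exp_one_pow]
  rw [one_div, ← inv_pow]
  apply pow_le_pow_left₀ (by positivity)
  rw [inv_le_inv₀ (Real.exp_pos 1) (by norm_num)]
  exact h2e

theorem ser3 (n : ℕ) : ∑ m ∈ Finset.range n, Real.exp (-((m:ℝ)+1)) ≤ 1 :=
  le_trans (Finset.sum_le_sum fun m _ => exp_neg_le m) (ser2 n)

theorem sqrt_le_two_pow (n : ℕ) (hn : 1 ≤ n) : Real.sqrt n ≤ 2 ^ n := by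
  have hn1 : (1:ℝ) ≤ (n:ℝ) := by exact_mod_cast hn
  have h : Real.sqrt n ≤ Real.sqrt ((n:ℝ) ^ 2) := Real.sqrt_le_sqrt (by nlinarith)
  rw [Real.sqrt_sq (by linarith)] at h
  calc Real.sqrt n ≤ (n:ℝ) := h
    _ ≤ 2 ^ n := by exact_mod_cast (Nat.lt_two_pow_self (n := n)).le


noncomputable def gridE (p : ℕ) (M : ℝ) (m : ℕ) : Finset (EuclideanSpace ℝ (Fin p)) :=
  (Fintype.piFinset fun _ : Fin p => grid1 M m).map
    ⟨(WithLp.equiv 2 (Fin p → ℝ)).symm, (WithLp.equiv 2 (Fin p → ℝ)).symm.injective⟩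

theorem gridE_card (p : ℕ) (M : ℝ) (m : ℕ) : (gridE p M m).card ≤ 2 ^ (m * p) := by
  rw [gridE, Finset.card_map, Fintype.card_piFinset]
  calc ∏ _i : Fin p, (grid1 M m).card ≤ ∏ _i : Fin p, 2 ^ m :=
        Finset.prod_le_prod (fun _ _ => Nat.zero_le _) (fun i _ => grid1_card M m)
    _ = 2 ^ (m * p) := by
        rw [Finset.prod_const, Finset.card_univ, Fintype.card_fin, ← pow_mul]

theorem gridE_mem_cube {p : ℕ} {M : ℝ} (hM : 0 < M) {m : ℕ} {u : EuclideanSpace ℝ (Fin p)}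
    (hu : u ∈ gridE p M m) : u ∈ cube p M := by
  rcases Finset.mem_map.1 hu with ⟨v, hv, rfl⟩
  intro i
  have : v i ∈ grid1 M m := Fintype.mem_piFinset.1 hv i
  exact grid1_mem_abs hM this

theorem gridE_cover {p : ℕ} {M : ℝ} (hM : 0 < M) (m : ℕ) {x : EuclideanSpace ℝ (Fin p)}
    (hx : x ∈ cube p M) : ∃ u ∈ gridE p M m, ‖x - u‖ ≤ Real.sqrt p * (M / 2 ^ m) := by
  have hch : ∀ i : Fin p, ∃ y ∈ grid1 M m, |x i - y| ≤ M / 2 ^ m :=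
    fun i => grid1_cover hM m (hx i)
  choose v hv1 hv2 using hch
  refine ⟨(WithLp.equiv 2 (Fin p → ℝ)).symm v, Finset.mem_map.2
    ⟨v, Fintype.mem_piFinset.2 hv1, rfl⟩, ?_⟩
  apply norm_le_sqrt_mul (by positivity)
  intro i
  have : (x - (WithLp.equiv 2 (Fin p → ℝ)).symm v) i = x i - v i := rfl
  rw [this]
  exact hv2 i

noncomputable def netT (p k : ℕ) (M : ℝ) (m : ℕ) : Finset (Fin k → EuclideanSpace ℝ (Fin p)) :=
  Fintype.piFinset fun _ : Fin k => gridE p M m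

theorem netT_card (p k : ℕ) (M : ℝ) (m : ℕ) : (netT p k M m).card ≤ 2 ^ (m * p * k) := by
  rw [netT, Fintype.card_piFinset]
  calc ∏ _j : Fin k, (gridE p M m).card ≤ ∏ _j : Fin k, 2 ^ (m * p) :=
        Finset.prod_le_prod (fun _ _ => Nat.zero_le _) (fun j _ => gridE_card p M m)
    _ = 2 ^ (m * p * k) := by
        rw [Finset.prod_const, Finset.card_univ, Fintype.card_fin, ← pow_mul]

theorem netT_mem_cube {p k : ℕ} {M : ℝ} (hM : 0 < M) {m : ℕ}
    {u : Fin k → EuclideanSpace ℝ (Fin p)} (hu : u ∈ netT p k M m) (j : Fin k) :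
    u j ∈ cube p M :=
  gridE_mem_cube hM (Fintype.mem_piFinset.1 hu j)

theorem netT_cover {p k : ℕ} {M : ℝ} (hM : 0 < M) (m : ℕ)
    {Θ : Fin k → EuclideanSpace ℝ (Fin p)} (hΘ : ∀ j, Θ j ∈ cube p M) :
    ∃ u ∈ netT p k M m, ∀ j, ‖Θ j - u j‖ ≤ Real.sqrt p * (M / 2 ^ m) := by
  have hch : ∀ j : Fin k, ∃ y ∈ gridE p M m, ‖Θ j - y‖ ≤ Real.sqrt p * (M / 2 ^ m) :=
    fun j => gridE_cover hM m (hΘ j)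
  choose v hv1 hv2 using hch
  exact ⟨v, Fintype.mem_piFinset.2 hv1, hv2⟩


section
variable {p k : ℕ} {M : ℝ} (hM : 0 < M) {φ : EuclideanSpace ℝ (Fin p) → ℝ}
  (hφconv : ConvexOn ℝ Set.univ φ) (hφdiff : Differentiable ℝ φ)
  {H : ℝ} (hH : 0 ≤ H)
  (hgradlip : ∀ x ∈ cube p M, ∀ y ∈ cube p M,
      ‖gradient φ x - gradient φ y‖ ≤ H * ‖x - y‖)
  (Ψ : (Fin k → ℝ) → ℝ) (hΨzero : Ψ 0 = 0)
  {τ : ℝ} (hτ : 0 < τ)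
  (hΨlip : ∀ u v : Fin k → ℝ, (∀ j, 0 ≤ u j) → (∀ j, 0 ≤ v j) →
      |Ψ u - Ψ v| ≤ τ * ∑ j, |u j - v j|)

include hM in
theorem sub_mem_norm {x y : EuclideanSpace ℝ (Fin p)} (hx : x ∈ cube p M) (hy : y ∈ cube p M) :
    ‖x - y‖ ≤ Real.sqrt p * (2 * M) := by
  apply norm_le_sqrt_mul (by linarith)
  intro i
  have h1 := hx i; have h2 := hy i
  have : (x - y) i = x i - y i := rfl
  rw [this]
  cases abs_le.1 h1; cases abs_le.1 h2
  rw [abs_le]; constructor <;> linarith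

include hφconv hφdiff hH hgradlip in
theorem dphi_le_cube {x y : EuclideanSpace ℝ (Fin p)} (hx : x ∈ cube p M) (hy : y ∈ cube p M) :
    dphi φ x y ≤ H * ‖x - y‖ ^ 2 := by
  have key : dphi φ x y + dphi φ y x
      = inner ℝ (gradient φ x - gradient φ y) (x - y) := by
    simp only [dphi]
    have h1 : (y - x : EuclideanSpace ℝ (Fin p)) = -(x - y) := by abel
    rw [h1, inner_neg_right, inner_sub_left]
    ring
  have h2 := dphi_nonneg hφconv hφdiff y x
  have h3 : inner ℝ (gradient φ x - gradient φ y) (x - y) ≤ H * ‖x - y‖ ^ 2 := by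
    calc (inner ℝ (gradient φ x - gradient φ y) (x - y) : ℝ)
        ≤ ‖gradient φ x - gradient φ y‖ * ‖x - y‖ := real_inner_le_norm _ _
      _ ≤ (H * ‖x - y‖) * ‖x - y‖ := by
          apply mul_le_mul_of_nonneg_right (hgradlip x hx y hy) (norm_nonneg _)
      _ = H * ‖x - y‖ ^ 2 := by ring
  linarith

include hM hφconv hφdiff hH hgradlip in
theorem dphi_diff_le {x t t' : EuclideanSpace ℝ (Fin p)} (hx : x ∈ cube p M)
    (ht : t ∈ cube p M) (ht' : t' ∈ cube p M) :
    |dphi φ x t - dphi φ x t'| ≤ 4 * H * (Real.sqrt p * M) * ‖t - t'‖ := by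
  have key : dphi φ x t - dphi φ x t'
      = dphi φ t' t + inner ℝ (gradient φ t' - gradient φ t) (x - t') := by
    simp only [dphi, inner_sub_left]
    have h1 : (inner ℝ (gradient φ t) (x - t) : ℝ)
        = inner ℝ (gradient φ t) (t' - t) + inner ℝ (gradient φ t) (x - t') := by
      rw [← inner_add_right]
      congr 1
      abel
    linarith
  have h2 : dphi φ t' t ≤ H * ‖t' - t‖ ^ 2 := dphi_le_cube hφconv hφdiff hH hgradlip ht' ht
  have h3 : |(inner ℝ (gradient φ t' - gradient φ t) (x - t') : ℝ)|
      ≤ (H * ‖t' - t‖) * (Real.sqrt p * (2 * M)) := by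
    calc |(inner ℝ (gradient φ t' - gradient φ t) (x - t') : ℝ)|
        ≤ ‖gradient φ t' - gradient φ t‖ * ‖x - t'‖ := abs_real_inner_le_norm _ _
      _ ≤ (H * ‖t' - t‖) * (Real.sqrt p * (2 * M)) := by
          apply mul_le_mul (hgradlip t' ht' t ht) (sub_mem_norm hM hx ht') (norm_nonneg _)
          positivity
  have h4 : ‖t' - t‖ ≤ Real.sqrt p * (2 * M) := sub_mem_norm hM ht' ht
  have h5 : 0 ≤ dphi φ t' t := dphi_nonneg hφconv hφdiff t' t
  have h6 : ‖t' - t‖ = ‖t - t'‖ := by rw [norm_sub_rev]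
  have h7 : 0 ≤ ‖t - t'‖ := norm_nonneg _
  rw [key]
  rw [h6] at h2 h3 h4
  have hsp : 0 ≤ Real.sqrt p * M := by positivity
  calc |dphi φ t' t + inner ℝ (gradient φ t' - gradient φ t) (x - t')|
      ≤ |dphi φ t' t| + |(inner ℝ (gradient φ t' - gradient φ t) (x - t') : ℝ)| := abs_add_le _ _
    _ = dphi φ t' t + |(inner ℝ (gradient φ t' - gradient φ t) (x - t') : ℝ)| := by
        rw [abs_of_nonneg h5]
    _ ≤ H * ‖t - t'‖ ^ 2 + (H * ‖t - t'‖) * (Real.sqrt p * (2 * M)) := add_le_add h2 h3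
    _ ≤ 4 * H * (Real.sqrt p * M) * ‖t - t'‖ := by
        have : H * ‖t - t'‖ ^ 2 = (H * ‖t - t'‖) * ‖t - t'‖ := by ring
        rw [this]
        nlinarith [mul_nonneg hH h7]
include hM hφconv hφdiff hH hgradlip hτ hΨlip in
theorem fTheta_lip {Θ Θ' : Fin k → EuclideanSpace ℝ (Fin p)}
    (hΘ : ∀ j, Θ j ∈ cube p M) (hΘ' : ∀ j, Θ' j ∈ cube p M)
    {x : EuclideanSpace ℝ (Fin p)} (hx : x ∈ cube p M)
    {e : ℝ} (he : 0 ≤ e) (hclose : ∀ j, ‖Θ j - Θ' j‖ ≤ e) :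
    |fTheta φ Ψ Θ x - fTheta φ Ψ Θ' x| ≤ τ * k * (4 * H * (Real.sqrt p * M)) * e := by
  have h1 := hΨlip (fun j => dphi φ x (Θ j)) (fun j => dphi φ x (Θ' j))
    (fun j => dphi_nonneg hφconv hφdiff _ _) (fun j => dphi_nonneg hφconv hφdiff _ _)
  refine le_trans h1 ?_
  have h2 : ∀ j : Fin k, |dphi φ x (Θ j) - dphi φ x (Θ' j)|
      ≤ 4 * H * (Real.sqrt p * M) * e := by
    intro j
    refine le_trans (dphi_diff_le hM hφconv hφdiff hH hgradlip hx (hΘ j) (hΘ' j)) ?_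
    have : 0 ≤ 4 * H * (Real.sqrt p * M) := by positivity
    exact mul_le_mul_of_nonneg_left (hclose j) this
  calc τ * ∑ j, |dphi φ x (Θ j) - dphi φ x (Θ' j)|
      ≤ τ * ∑ _j : Fin k, 4 * H * (Real.sqrt p * M) * e := by
        apply mul_le_mul_of_nonneg_left (Finset.sum_le_sum fun j _ => h2 j) hτ.le
    _ = τ * k * (4 * H * (Real.sqrt p * M)) * e := by
        rw [Finset.sum_const, Finset.card_univ, Fintype.card_fin, nsmul_eq_mul]
        ring

include hM hφconv hφdiff hH hgradlip hΨzero hτ hΨlip in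
theorem fTheta_abs_le {Θ : Fin k → EuclideanSpace ℝ (Fin p)}
    (hΘ : ∀ j, Θ j ∈ cube p M) {x : EuclideanSpace ℝ (Fin p)} (hx : x ∈ cube p M) :
    |fTheta φ Ψ Θ x| ≤ τ * k * (4 * H * (p * M ^ 2)) := by
  have h1 := hΨlip (fun j => dphi φ x (Θ j)) 0
    (fun j => dphi_nonneg hφconv hφdiff _ _) (fun j => le_refl 0)
  simp only [fTheta, Pi.zero_apply, sub_zero, hΨzero] at h1 ⊢
  refine le_trans h1 ?_
  have h2 : ∀ j : Fin k, |dphi φ x (Θ j)| ≤ 4 * H * (p * M ^ 2) := by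
    intro j
    rw [abs_of_nonneg (dphi_nonneg hφconv hφdiff _ _)]
    refine le_trans (dphi_le_cube hφconv hφdiff hH hgradlip hx (hΘ j)) ?_
    have h3 : ‖x - Θ j‖ ≤ Real.sqrt p * (2 * M) := sub_mem_norm hM hx (hΘ j)
    have h4 : ‖x - Θ j‖ ^ 2 ≤ (Real.sqrt p * (2 * M)) ^ 2 := by
      apply sq_le_sq' _ h3
      have := norm_nonneg (x - Θ j); linarith
    have h5 : (Real.sqrt p * (2 * M)) ^ 2 = 4 * (p * M ^ 2) := by
      rw [mul_pow, Real.sq_sqrt (Nat.cast_nonneg p)]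
      ring
    calc H * ‖x - Θ j‖ ^ 2 ≤ H * (Real.sqrt p * (2 * M)) ^ 2 :=
          mul_le_mul_of_nonneg_left h4 hH
      _ = 4 * H * (p * M ^ 2) := by rw [h5]; ring
  calc τ * ∑ j, |dphi φ x (Θ j)|
      ≤ τ * ∑ _j : Fin k, 4 * H * (p * M ^ 2) :=
        mul_le_mul_of_nonneg_left (Finset.sum_le_sum fun j _ => h2 j) hτ.le
    _ = τ * k * (4 * H * (p * M ^ 2)) := by
        rw [Finset.sum_const, Finset.card_univ, Fintype.card_fin, nsmul_eq_mul]; ring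

include hφdiff hτ hφconv hΨlip in
theorem fTheta_measurable (Θ : Fin k → EuclideanSpace ℝ (Fin p)) :
    Measurable (fTheta φ Ψ Θ) := by
  have hcont : Continuous fun x => (fun j => dphi φ x (Θ j)) := by
    apply continuous_pi
    intro j
    unfold dphi
    have h1 : Continuous φ := hφdiff.continuous
    exact (h1.sub continuous_const).sub
      (continuous_const.inner (continuous_id.sub continuous_const))
  have hΨcont : ContinuousOn Ψ {v : Fin k → ℝ | ∀ j : Fin k, (0:ℝ) ≤ v j} := by
    apply LipschitzOnWith.continuousOn (K := (τ * k).toNNReal)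
    rw [lipschitzOnWith_iff_dist_le_mul]
    intro u hu v hv
    rw [Real.coe_toNNReal _ (by positivity), Real.dist_eq]
    refine le_trans (hΨlip u v hu hv) ?_
    have hd : ∀ j : Fin k, |u j - v j| ≤ dist u v := by
      intro j
      have := dist_le_pi_dist u v j
      rwa [Real.dist_eq] at this
    calc τ * ∑ j, |u j - v j| ≤ τ * ∑ _j : Fin k, dist u v := by
          apply mul_le_mul_of_nonneg_left (Finset.sum_le_sum fun j _ => hd j) hτ.le
      _ = (τ * k) * dist u v := by
          rw [Finset.sum_const, Finset.card_univ, Fintype.card_fin, nsmul_eq_mul]; ring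
  have : Continuous (fTheta φ Ψ Θ) := by
    apply hΨcont.comp_continuous hcont
    intro x
    exact fun j => dphi_nonneg hφconv hφdiff _ _
  exact this.measurable
end

section
variable {p : ℕ} {M : ℝ}
  {Ω : Type} [MeasureSpace Ω] [IsProbabilityMeasure (ℙ : Measure Ω)]
  {P : Measure (EuclideanSpace ℝ (Fin p))} [IsProbabilityMeasure P]
  (hP : P (cube p M) = 1)
  {X : ℕ → Ω → EuclideanSpace ℝ (Fin p)}
  (hXmeas : ∀ i, Measurable (X i))
  (hXlaw : ∀ i, Measure.map (X i) ℙ = P)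
  (hXindep : iIndepFun X ℙ)

include hP hXmeas hXlaw in
theorem ae_mem_cube (i : ℕ) : ∀ᵐ ω ∂(ℙ : Measure Ω), X i ω ∈ cube p M := by
  have h1 : (ℙ : Measure Ω) (X i ⁻¹' (cube p M)ᶜ) = P (cube p M)ᶜ := by
    rw [← hXlaw i, Measure.map_apply (hXmeas i) (measurableSet_cube p M).compl]
  have h2 : P (cube p M)ᶜ = 0 := by
    rw [measure_compl (measurableSet_cube p M) (measure_ne_top _ _), hP, measure_univ]
    simp
  rw [ae_iff]
  rw [h2] at h1
  rw [show {a : Ω | ¬X i a ∈ cube p M} = X i ⁻¹' (cube p M)ᶜ from rfl]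
  exact h1

include hP hXmeas hXlaw in
theorem integral_comp_eq {g : EuclideanSpace ℝ (Fin p) → ℝ} (hg : Measurable g) (i : ℕ) :
    ∫ ω, g (X i ω) ∂(ℙ : Measure Ω) = ∫ x, g x ∂P := by
  rw [← hXlaw i, integral_map (hXmeas i).aemeasurable hg.aestronglyMeasurable]

include hP in
theorem abs_integral_le {g : EuclideanSpace ℝ (Fin p) → ℝ} {c : ℝ}
    (hgb : ∀ x ∈ cube p M, |g x| ≤ c) : |∫ x, g x ∂P| ≤ c := by
  have hae : ∀ᵐ x ∂P, ‖g x‖ ≤ c := by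
    have h2 : P (cube p M)ᶜ = 0 := by
      rw [measure_compl (measurableSet_cube p M) (measure_ne_top _ _), hP, measure_univ]
      simp
    rw [ae_iff]
    refine measure_mono_null ?_ h2
    intro x hx
    simp only [Set.mem_setOf_eq, Real.norm_eq_abs, not_le] at hx ⊢
    intro hmem
    exact absurd (hgb x hmem) (not_le.2 hx)
  calc |∫ x, g x ∂P| = ‖∫ x, g x ∂P‖ := rfl
    _ ≤ c * (P Set.univ).toReal := norm_integral_le_of_norm_le_const hae
    _ = c := by simp

include hP hXmeas hXlaw hXindep in
theorem hoeff2 {g : EuclideanSpace ℝ (Fin p) → ℝ} (hg : Measurable g) {c : ℝ} (hc : 0 < c)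
    (hgb : ∀ x ∈ cube p M, |g x| ≤ c) {n : ℕ} (hn : 1 ≤ n) {s : ℝ} (hs : 0 ≤ s) :
    (ℙ : Measure Ω) {ω | s ≤ |(n : ℝ)⁻¹ * ∑ i ∈ Finset.range n, g (X i ω) - ∫ x, g x ∂P|}
      ≤ ENNReal.ofReal (2 * Real.exp (-((n : ℝ) * s ^ 2) / (16 * c ^ 2))) := by
  set μg := ∫ x, g x ∂P with hμg
  have hμgb : |μg| ≤ c := abs_integral_le hP hgb
  set Z : ℕ → Ω → ℝ := fun i ω => g (X i ω) - μg with hZ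
  have hZmeas : ∀ i, Measurable (Z i) := fun i => ((hg.comp (hXmeas i)).sub measurable_const)
  have hZmean : ∀ i, ∫ ω, Z i ω ∂(ℙ : Measure Ω) = 0 := by
    intro i
    have h1 : Integrable (fun ω => g (X i ω)) (ℙ : Measure Ω) := by
      refine Integrable.mono' (integrable_const c) (hg.comp (hXmeas i)).aestronglyMeasurable ?_
      filter_upwards [ae_mem_cube hP hXmeas hXlaw i] with ω hω
      rw [Real.norm_eq_abs]; exact hgb _ hω
    rw [hZ]
    simp only
    rw [integral_sub h1 (integrable_const _), integral_comp_eq hP hXmeas hXlaw hg i,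
      integral_const]
    simp [hμg]
  have hZbd : ∀ i, ∀ᵐ ω ∂(ℙ : Measure Ω), |Z i ω| ≤ 2 * c := by
    intro i
    filter_upwards [ae_mem_cube hP hXmeas hXlaw i] with ω hω
    have := hgb _ hω
    rw [hZ]
    simp only
    have := abs_sub_abs_le_abs_sub (g (X i ω)) μg
    cases abs_le.1 (hgb _ hω); cases abs_le.1 hμgb
    rw [abs_le]; constructor <;> linarith
  have hZind : iIndepFun Z ℙ := by
    have := hXindep.comp (fun _ : ℕ => fun x => g x - μg) (fun _ => hg.sub measurable_const)
    exact this
  have hZind' : iIndepFun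
      (fun i => -Z i) ℙ := by
    have := hZind.comp (fun _ : ℕ => fun x : ℝ => -x) (fun _ => measurable_neg)
    exact this
  have key1 := sum_tail hZind hZmeas hZmean (by linarith : (0:ℝ) < 2*c) hZbd (n := n) hs
  have key2 := sum_tail hZind' (fun i => (hZmeas i).neg)
    (fun i => by simp only [Pi.neg_apply]; rw [integral_neg, hZmean i, neg_zero])
    (by linarith : (0:ℝ) < 2*c) (fun i => (hZbd i).mono fun ω h => by simpa [Pi.neg_apply, abs_neg] using h) (n := n) hs
  have hsub : {ω : Ω | s ≤ |(n : ℝ)⁻¹ * ∑ i ∈ Finset.range n, g (X i ω) - μg|}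
      ⊆ {ω | (n : ℝ) * s ≤ ∑ i ∈ Finset.range n, Z i ω}
        ∪ {ω | (n : ℝ) * s ≤ ∑ i ∈ Finset.range n, (-Z i) ω} := by
    intro ω hω
    simp only [Set.mem_setOf_eq] at hω
    have hnpos : (0 : ℝ) < n := by exact_mod_cast hn
    have hrw : (n : ℝ)⁻¹ * ∑ i ∈ Finset.range n, g (X i ω) - μg
        = (n : ℝ)⁻¹ * ∑ i ∈ Finset.range n, Z i ω := by
      rw [hZ]
      simp only
      rw [Finset.sum_sub_distrib, Finset.sum_const, Finset.card_range, nsmul_eq_mul, mul_sub]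
      field_simp
    rw [hrw] at hω
    have habs : (n : ℝ) * s ≤ |∑ i ∈ Finset.range n, Z i ω| := by
      have h3 : |(n : ℝ)⁻¹ * ∑ i ∈ Finset.range n, Z i ω|
          = (n : ℝ)⁻¹ * |∑ i ∈ Finset.range n, Z i ω| := by
        rw [abs_mul, abs_of_pos (by positivity : (0:ℝ) < (n:ℝ)⁻¹)]
      rw [h3] at hω
      calc (n : ℝ) * s ≤ (n : ℝ) * ((n : ℝ)⁻¹ * |∑ i ∈ Finset.range n, Z i ω|) :=
            mul_le_mul_of_nonneg_left hω hnpos.le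
        _ = |∑ i ∈ Finset.range n, Z i ω| := by field_simp
    rcases abs_le.1 (le_refl |∑ i ∈ Finset.range n, Z i ω|) with ⟨h1, h2⟩
    rcases le_or_gt ((n : ℝ) * s) (∑ i ∈ Finset.range n, Z i ω) with h | h
    · exact Or.inl h
    · right
      simp only [Set.mem_setOf_eq, Pi.neg_apply, Finset.sum_neg_distrib]
      rcases abs_cases (∑ i ∈ Finset.range n, Z i ω) with ⟨he, _⟩ | ⟨he, _⟩
      · linarith [habs, he]
      · linarith [habs, he]
  calc (ℙ : Measure Ω) {ω | s ≤ |(n : ℝ)⁻¹ * ∑ i ∈ Finset.range n, g (X i ω) - μg|}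
      ≤ (ℙ : Measure Ω) ({ω | (n : ℝ) * s ≤ ∑ i ∈ Finset.range n, Z i ω}
        ∪ {ω | (n : ℝ) * s ≤ ∑ i ∈ Finset.range n, (-Z i) ω}) := measure_mono hsub
    _ ≤ (ℙ : Measure Ω) {ω | (n : ℝ) * s ≤ ∑ i ∈ Finset.range n, Z i ω}
        + (ℙ : Measure Ω) {ω | (n : ℝ) * s ≤ ∑ i ∈ Finset.range n, (-Z i) ω} :=
          measure_union_le _ _
    _ ≤ ENNReal.ofReal (Real.exp (-((n : ℝ) * s ^ 2) / (4 * (2*c) ^ 2)))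
        + ENNReal.ofReal (Real.exp (-((n : ℝ) * s ^ 2) / (4 * (2*c) ^ 2))) := add_le_add key1 key2
    _ = ENNReal.ofReal (2 * Real.exp (-((n : ℝ) * s ^ 2) / (16 * c ^ 2))) := by
        rw [← ENNReal.ofReal_add (Real.exp_pos _).le (Real.exp_pos _).le]
        congr 1
        have : (4 * (2*c)^2 : ℝ) = 16 * c ^ 2 := by ring
        rw [this]
        ring
end

/-- `√n`-consistency of the excess risk: for every `δ ∈ (0,1)` there are a
constant `C > 0` and an integer `N` such that for all `n ≥ N`, with probability
at least `1 - δ`, `√n (P f_Θ̂ₙ - P f_Θ*) ≤ C`. -/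
theorem sqrt_n_consistency
    {p k : ℕ} (hp : 0 < p) (hk : 0 < k) {M : ℝ} (hM : 0 < M)
    (φ : EuclideanSpace ℝ (Fin p) → ℝ)
    (hφconv : ConvexOn ℝ Set.univ φ) (hφdiff : Differentiable ℝ φ)
    (hφzero : φ 0 = 0) (hgradzero : gradient φ 0 = 0)
    {H : ℝ} (hH : 0 ≤ H)
    (hgradlip : ∀ x ∈ cube p M, ∀ y ∈ cube p M,
      ‖gradient φ x - gradient φ y‖ ≤ H * ‖x - y‖)
    (Ψ : (Fin k → ℝ) → ℝ)
    (hΨnonneg : ∀ u : Fin k → ℝ, (∀ j, 0 ≤ u j) → 0 ≤ Ψ u)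
    (hΨmono : ∀ u v : Fin k → ℝ, (∀ j, 0 ≤ u j) → (∀ j, u j ≤ v j) → Ψ u ≤ Ψ v)
    (hΨzero : Ψ 0 = 0)
    {τ : ℝ} (hτ : 0 < τ)
    (hΨlip : ∀ u v : Fin k → ℝ, (∀ j, 0 ≤ u j) → (∀ j, 0 ≤ v j) →
      |Ψ u - Ψ v| ≤ τ * ∑ j, |u j - v j|)
    {Ω : Type} [MeasureSpace Ω] [IsProbabilityMeasure (ℙ : Measure Ω)]
    (P : Measure (EuclideanSpace ℝ (Fin p))) [IsProbabilityMeasure P]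
    (hP : P (cube p M) = 1)
    (X : ℕ → Ω → EuclideanSpace ℝ (Fin p))
    (hXmeas : ∀ i, Measurable (X i))
    (hXlaw : ∀ i, Measure.map (X i) ℙ = P)
    (hXindep : iIndepFun X ℙ)
    (Θstar : Fin k → EuclideanSpace ℝ (Fin p))
    (hΘstarC : ∀ j, Θstar j ∈ cube p M)
    (hΘstar : ∀ Θ : Fin k → EuclideanSpace ℝ (Fin p),
      ∫ x, fTheta φ Ψ Θstar x ∂P ≤ ∫ x, fTheta φ Ψ Θ x ∂P)
    (Θhat : ℕ → Ω → Fin k → EuclideanSpace ℝ (Fin p))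
    (hΘhatmeas : ∀ n, Measurable (Θhat n))
    (hΘhat : ∀ᵐ ω ∂(ℙ : Measure Ω), ∀ n : ℕ, 0 < n →
      (∀ j, Θhat n ω j ∈ cube p M) ∧
      ∀ Θ : Fin k → EuclideanSpace ℝ (Fin p), (∀ j, Θ j ∈ cube p M) →
        (n : ℝ)⁻¹ * ∑ i ∈ Finset.range n, fTheta φ Ψ (Θhat n ω) (X i ω) ≤
          (n : ℝ)⁻¹ * ∑ i ∈ Finset.range n, fTheta φ Ψ Θ (X i ω))
    :
    ∀ δ : ℝ, 0 < δ → δ < 1 →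
      ∃ C : ℝ, 0 < C ∧ ∃ N : ℕ, ∀ n : ℕ, N ≤ n →
        ENNReal.ofReal (1 - δ) ≤
          ℙ {ω : Ω | Real.sqrt n *
            (∫ x, fTheta φ Ψ (Θhat n ω) x ∂P - ∫ x, fTheta φ Ψ Θstar x ∂P) ≤ C} := by
  intro δ hδ0 hδ1
  classical
  set f : (Fin k → EuclideanSpace ℝ (Fin p)) → EuclideanSpace ℝ (Fin p) → ℝ :=
    fTheta φ Ψ with hf
  set sp : ℝ := Real.sqrt p with hsp
  have hsp1 : 1 ≤ sp := by
    rw [hsp, show (1:ℝ) = Real.sqrt 1 by simp]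
    exact Real.sqrt_le_sqrt (by exact_mod_cast hp)
  have hsp0 : 0 < sp := lt_of_lt_of_le one_pos hsp1
  set Γ : ℝ := τ * k * (4 * H * (sp * M)) with hΓ
  have hΓ0 : 0 ≤ Γ := by
    have : (0:ℝ) ≤ (k:ℝ) := Nat.cast_nonneg k
    positivity
  set Γ1 : ℝ := Γ + 1 with hΓ1
  have hΓ1pos : 0 < Γ1 := by rw [hΓ1]; linarith
  set a : ℝ := 16 * ((p : ℝ) * (k : ℝ) * Real.log 4 + 1) with ha
  have hlog4 : 0 < Real.log 4 := Real.log_pos (by norm_num)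
  have ha0 : 0 < a := by
    rw [ha]
    have h3 : (0:ℝ) ≤ (p:ℝ) * (k:ℝ) * Real.log 4 := by positivity
    linarith
  set cδ : ℝ := 16 * Real.log (4 / δ) with hcδ
  have hcδ0 : 0 < cδ := by
    have h1 : 1 < 4/δ := by rw [lt_div_iff₀ hδ0]; linarith
    have := Real.log_pos h1
    rw [hcδ]; linarith
  set C : ℝ := sp * M * Γ1 * (2 + 6 * Real.sqrt a + 5 * Real.sqrt cδ) + 1 with hC
  have hCpos : 0 < C := by
    have h1 : 0 ≤ Real.sqrt a := Real.sqrt_nonneg a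
    have h2 : 0 ≤ Real.sqrt cδ := Real.sqrt_nonneg cδ
    have : 0 < sp * M * Γ1 * (2 + 6 * Real.sqrt a + 5 * Real.sqrt cδ) := by positivity
    linarith
  refine ⟨C, hCpos, 1, ?_⟩
  intro n hn
  have hnR : (1:ℝ) ≤ (n:ℝ) := by exact_mod_cast hn
  have hnpos : (0:ℝ) < n := by linarith
  have hsn : 0 < Real.sqrt n := Real.sqrt_pos.2 hnpos
  -- basic facts about f
  have hmeasf : ∀ u, Measurable (f u) := fun u =>
    fTheta_measurable hφconv hφdiff Ψ hτ hΨlip u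
  have haecube : ∀ᵐ x ∂P, x ∈ cube p M := by
    have h2 : P (cube p M)ᶜ = 0 := by
      rw [measure_compl (measurableSet_cube p M) (measure_ne_top _ _), hP, measure_univ]
      simp
    rw [ae_iff]
    exact h2
  have hintf : ∀ u : Fin k → EuclideanSpace ℝ (Fin p), (∀ j, u j ∈ cube p M) →
      Integrable (f u) P := by
    intro u hu
    refine Integrable.mono' (integrable_const (τ * k * (4 * H * ((p:ℝ) * M ^ 2))))
      (hmeasf u).aestronglyMeasurable ?_
    filter_upwards [haecube] with x hx
    rw [Real.norm_eq_abs]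
    exact fTheta_abs_le hM hφconv hφdiff hH hgradlip Ψ hΨzero hτ hΨlip hu hx
  have hlipf : ∀ (u v : Fin k → EuclideanSpace ℝ (Fin p)), (∀ j, u j ∈ cube p M) →
      (∀ j, v j ∈ cube p M) → ∀ x ∈ cube p M, ∀ e : ℝ, 0 ≤ e →
      (∀ j, ‖u j - v j‖ ≤ e) → |f u x - f v x| ≤ Γ1 * e := by
    intro u v hu hv x hx e he hcl
    refine le_trans (fTheta_lip hM hφconv hφdiff hH hgradlip Ψ hτ hΨlip hu hv hx he hcl) ?_
    have : Γ ≤ Γ1 := by rw [hΓ1]; linarith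
    calc τ * (k:ℝ) * (4 * H * (Real.sqrt p * M)) * e = Γ * e := by rw [hΓ, hsp]
      _ ≤ Γ1 * e := mul_le_mul_of_nonneg_right this he
  -- thresholds
  set t0 : ℝ := 2 * sp * M * Γ1 * Real.sqrt (cδ / n) with ht0
  set tm : ℕ → ℝ := fun m => 3 * sp * M * Γ1 * (1/2)^m * Real.sqrt ((a * m + cδ)/n) with htm
  have ht0nn : 0 ≤ t0 := by rw [ht0]; positivity
  have htmnn : ∀ m, 0 ≤ tm m := by
    intro m; rw [htm]
    have : (0:ℝ) ≤ (m:ℝ) := Nat.cast_nonneg m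
    positivity
  -- events
  set Ev : (Fin k → EuclideanSpace ℝ (Fin p)) → (Fin k → EuclideanSpace ℝ (Fin p)) → ℝ → Set Ω :=
    fun u v t => {ω | t ≤ |(n:ℝ)⁻¹ * ∑ i ∈ Finset.range n, (f u (X i ω) - f v (X i ω))
      - ∫ x, (f u x - f v x) ∂P|} with hEvdef
  have hEvbd : ∀ (u v : Fin k → EuclideanSpace ℝ (Fin p)), (∀ j, u j ∈ cube p M) →
      (∀ j, v j ∈ cube p M) → ∀ e : ℝ, 0 < e → (∀ j, ‖u j - v j‖ ≤ e) → ∀ t : ℝ, 0 ≤ t →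
      ℙ (Ev u v t) ≤ ENNReal.ofReal (2 * Real.exp (-((n:ℝ) * t^2) / (16 * (Γ1 * e)^2))) := by
    intro u v hu hv e he hcl t ht
    have hg : Measurable (fun x => f u x - f v x) := (hmeasf u).sub (hmeasf v)
    have hgb : ∀ x ∈ cube p M, |f u x - f v x| ≤ Γ1 * e := fun x hx =>
      hlipf u v hu hv x hx e he.le hcl
    exact hoeff2 hP hXmeas hXlaw hXindep hg (by positivity) hgb hn ht
  set pairsF : ℕ → Finset ((Fin k → EuclideanSpace ℝ (Fin p)) × (Fin k → EuclideanSpace ℝ (Fin p))) :=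
    fun m => (netT p k M (m+1) ×ˢ netT p k M m).filter
      (fun q => ∀ j, ‖q.1 j - q.2 j‖ ≤ 3 * sp * (M / 2^(m+1))) with hpairsF
  set A0 : Set Ω := ⋃ u ∈ netT p k M 0, Ev u Θstar t0 with hA0
  set Am : ℕ → Set Ω := fun m => ⋃ q ∈ pairsF m, Ev q.1 q.2 (tm (m+1)) with hAmdef
  set Bad : Set Ω := A0 ∪ ⋃ m ∈ Finset.range n, Am m with hBad
  -- probability of A0
  have hexpc : Real.exp (-cδ/16) = δ/4 := by
    rw [hcδ, show -(16 * Real.log (4/δ))/16 = -Real.log (4/δ) by ring, Real.exp_neg,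
      Real.exp_log (by positivity)]
    rw [inv_div]
  have hA0bd : ℙ A0 ≤ ENNReal.ofReal (δ/2) := by
    refine le_trans (measure_biUnion_finset_le _ _) ?_
    have hsingle : ∀ u ∈ netT p k M 0, ℙ (Ev u Θstar t0) ≤ ENNReal.ofReal (δ/2) := by
      intro u hu
      have hcl : ∀ j, ‖u j - Θstar j‖ ≤ 2 * sp * M := by
        intro j
        refine le_trans (sub_mem_norm hM (netT_mem_cube hM hu j) (hΘstarC j)) (le_of_eq ?_)
        rw [hsp]; ring
      have hb := hEvbd u Θstar (netT_mem_cube hM hu) hΘstarC (2 * sp * M)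
        (by positivity) hcl t0 ht0nn
      refine le_trans hb (le_of_eq ?_)
      congr 1
      have h2 : t0^2 = (Γ1 * (2 * sp * M))^2 * (cδ / n) := by
        rw [ht0, mul_pow, Real.sq_sqrt (by positivity)]
        ring
      rw [h2]
      have h3 : -((n:ℝ) * ((Γ1 * (2 * sp * M))^2 * (cδ / n))) / (16 * (Γ1 * (2 * sp * M))^2)
          = -cδ/16 := by
        have hne : (Γ1 * (2 * sp * M))^2 ≠ 0 := by positivity
        field_simp
      rw [h3, hexpc]
      ring
    refine le_trans (Finset.sum_le_sum hsingle) ?_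
    rw [Finset.sum_const]
    have hcard : (netT p k M 0).card ≤ 1 := by
      have := netT_card p k M 0
      simpa using this
    calc (netT p k M 0).card • ENNReal.ofReal (δ/2)
        ≤ 1 • ENNReal.ofReal (δ/2) := nsmul_le_nsmul_left (by positivity) hcard
      _ = ENNReal.ofReal (δ/2) := one_nsmul _
  -- probability of Am
  have hexpm : ∀ mm : ℕ, (4:ℝ) ^ (mm*p*k) * (2 * Real.exp (-(a*mm + cδ)/16))
      = (δ/2) * Real.exp (-(mm:ℝ)) := by
    intro mm
    have h1 : -(a*(mm:ℝ) + cδ)/16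
        = -(((mm*p*k : ℕ):ℝ) * Real.log 4) + (-(mm:ℝ)) + (-Real.log (4/δ)) := by
      rw [ha, hcδ]
      push_cast
      ring
    rw [h1, Real.exp_add, Real.exp_add]
    rw [Real.exp_neg (((mm*p*k : ℕ):ℝ) * Real.log 4), Real.exp_nat_mul,
      Real.exp_log (by norm_num : (0:ℝ) < 4)]
    rw [Real.exp_neg (Real.log (4/δ)), Real.exp_log (by positivity)]
    have h4 : (4:ℝ) ^ (mm*p*k) ≠ 0 := by positivity
    field_simp
    ring
  have hAmbd : ∀ m : ℕ, ℙ (Am m)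
      ≤ ENNReal.ofReal ((δ/2) * Real.exp (-((m:ℝ)+1))) := by
    intro m
    have hsingle : ∀ q ∈ pairsF m, ℙ (Ev q.1 q.2 (tm (m+1)))
        ≤ ENNReal.ofReal (2 * Real.exp (-(a*((m+1:ℕ):ℝ) + cδ)/16)) := by
      intro q hq
      rw [hpairsF, Finset.mem_filter, Finset.mem_product] at hq
      obtain ⟨⟨hq1, hq2⟩, hqcl⟩ := hq
      have hb := hEvbd q.1 q.2 (netT_mem_cube hM hq1) (netT_mem_cube hM hq2)
        (3 * sp * (M / 2^(m+1))) (by positivity) hqcl (tm (m+1)) (htmnn _)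
      refine le_trans hb (le_of_eq ?_)
      congr 1
      have h2 : tm (m+1) ^ 2
          = (Γ1 * (3 * sp * (M / 2^(m+1))))^2 * ((a*((m+1:ℕ):ℝ) + cδ)/n) := by
        rw [htm]
        simp only
        rw [mul_pow, Real.sq_sqrt]
        · push_cast
          simp only [one_div, inv_pow]; ring
        · have h5 : (0:ℝ) ≤ ((m:ℝ)+1) := by positivity
          have h6 : (0:ℝ) ≤ a * ((m+1:ℕ):ℝ) := by positivity
          positivity
      rw [h2]
      have hne : (Γ1 * (3 * sp * (M / 2^(m+1))))^2 ≠ 0 := by positivity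
      have h3 : -((n:ℝ) * ((Γ1 * (3 * sp * (M / 2^(m+1))))^2 * ((a*((m+1:ℕ):ℝ) + cδ)/n)))
          / (16 * (Γ1 * (3 * sp * (M / 2^(m+1))))^2) = -(a*((m+1:ℕ):ℝ) + cδ)/16 := by
        field_simp
      rw [h3]
    refine le_trans (measure_biUnion_finset_le _ _) ?_
    refine le_trans (Finset.sum_le_sum hsingle) ?_
    rw [Finset.sum_const]
    have hcard : (pairsF m).card ≤ 4 ^ ((m+1)*p*k) := by
      rw [hpairsF]
      refine le_trans (Finset.card_filter_le _ _) ?_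
      rw [Finset.card_product]
      calc (netT p k M (m+1)).card * (netT p k M m).card
          ≤ 2 ^ ((m+1)*p*k) * 2 ^ (m*p*k) :=
            Nat.mul_le_mul (netT_card p k M (m+1)) (netT_card p k M m)
        _ ≤ 2 ^ ((m+1)*p*k) * 2 ^ ((m+1)*p*k) := by
            apply Nat.mul_le_mul_left
            apply Nat.pow_le_pow_right (by norm_num)
            apply Nat.mul_le_mul_right
            apply Nat.mul_le_mul_right
            omega
        _ = 4 ^ ((m+1)*p*k) := by
            rw [← pow_add, show (4:ℕ) = 2^2 by norm_num, ← pow_mul]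
            congr 1
            ring
    calc (pairsF m).card • ENNReal.ofReal (2 * Real.exp (-(a*((m+1:ℕ):ℝ) + cδ)/16))
        ≤ (4 ^ ((m+1)*p*k)) • ENNReal.ofReal (2 * Real.exp (-(a*((m+1:ℕ):ℝ) + cδ)/16)) :=
          nsmul_le_nsmul_left (by positivity) hcard
      _ = ENNReal.ofReal ((4:ℝ) ^ ((m+1)*p*k) * (2 * Real.exp (-(a*((m+1:ℕ):ℝ) + cδ)/16))) := by
          rw [nsmul_eq_mul]
          rw [← ENNReal.ofReal_natCast (4 ^ ((m+1)*p*k))]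
          rw [← ENNReal.ofReal_mul (by positivity)]
          congr 2
          push_cast
          ring
      _ = ENNReal.ofReal ((δ/2) * Real.exp (-((m:ℝ)+1))) := by
          rw [hexpm (m+1)]
          congr 2
          push_cast
          ring
  -- total bad probability
  have hBadbd : ℙ Bad ≤ ENNReal.ofReal δ := by
    rw [hBad]
    refine le_trans (measure_union_le _ _) ?_
    have h1 : ℙ (⋃ m ∈ Finset.range n, Am m) ≤ ENNReal.ofReal (δ/2) := by
      refine le_trans (measure_biUnion_finset_le _ _) ?_
      refine le_trans (Finset.sum_le_sum fun m _ => hAmbd m) ?_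
      rw [← ENNReal.ofReal_sum_of_nonneg]
      · apply ENNReal.ofReal_le_ofReal
        rw [← Finset.mul_sum]
        calc δ/2 * ∑ m ∈ Finset.range n, Real.exp (-((m:ℝ)+1))
            ≤ δ/2 * 1 := by
              apply mul_le_mul_of_nonneg_left (ser3 n) (by linarith)
          _ = δ/2 := mul_one _
      · intro m _
        have := Real.exp_pos (-((m:ℝ)+1))
        nlinarith
    calc ℙ A0 + ℙ (⋃ m ∈ Finset.range n, Am m)
        ≤ ENNReal.ofReal (δ/2) + ENNReal.ofReal (δ/2) := add_le_add hA0bd h1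
      _ = ENNReal.ofReal δ := by
          rw [← ENNReal.ofReal_add (by linarith) (by linarith)]
          norm_num
  -- null events
  have hNullE : ℙ {ω : Ω | ¬ ∀ i ∈ Finset.range n, X i ω ∈ cube p M} = 0 := by
    have hae : ∀ᵐ ω ∂(ℙ : Measure Ω), ∀ i : ℕ, i ∈ Finset.range n → X i ω ∈ cube p M := by
      rw [MeasureTheory.ae_all_iff]
      intro i
      exact (ae_mem_cube hP hXmeas hXlaw i).mono fun ω h _ => h
    exact ae_iff.1 hae
  have hNullH := ae_iff.1 hΘhat
  -- deterministic chaining estimate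
  have hdet : ∀ ω : Ω, (∀ i ∈ Finset.range n, X i ω ∈ cube p M) →
      (∀ j, Θhat n ω j ∈ cube p M) →
      ((n : ℝ)⁻¹ * ∑ i ∈ Finset.range n, f (Θhat n ω) (X i ω) ≤
        (n : ℝ)⁻¹ * ∑ i ∈ Finset.range n, f Θstar (X i ω)) →
      ω ∉ Bad →
      Real.sqrt n * (∫ x, f (Θhat n ω) x ∂P - ∫ x, f Θstar x ∂P) ≤ C := by
    intro ω hXcube hΘc hemp hBadω
    set Θ : Fin k → EuclideanSpace ℝ (Fin p) := Θhat n ω with hΘdef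
    set D : (Fin k → EuclideanSpace ℝ (Fin p)) → ℝ :=
      fun u => (n:ℝ)⁻¹ * ∑ i ∈ Finset.range n, f u (X i ω) - ∫ x, f u x ∂P with hD
    have hDdiff : ∀ u v : Fin k → EuclideanSpace ℝ (Fin p),
        (∀ j, u j ∈ cube p M) → (∀ j, v j ∈ cube p M) →
        (n:ℝ)⁻¹ * ∑ i ∈ Finset.range n, (f u (X i ω) - f v (X i ω))
          - ∫ x, (f u x - f v x) ∂P = D u - D v := by
      intro u v hu hv
      rw [Finset.sum_sub_distrib, mul_sub, integral_sub (hintf u hu) (hintf v hv), hD]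
      simp only
      ring
    choose cc hcc1 hcc2 using fun m : ℕ => netT_cover hM m hΘc
    -- piecewise bounds
    have hdist2 : ∀ m : ℕ, ∀ j, ‖cc (m+1) j - cc m j‖ ≤ 3 * sp * (M / 2^(m+1)) := by
      intro m j
      have h1 := hcc2 (m+1) j
      have h2 := hcc2 m j
      have h3 : ‖cc (m+1) j - cc m j‖ ≤ ‖Θ j - cc (m+1) j‖ + ‖Θ j - cc m j‖ := by
        have := norm_sub_le_norm_sub_add_norm_sub (cc (m+1) j) (Θ j) (cc m j)
        rw [norm_sub_rev (cc (m+1) j) (Θ j)] at this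
        exact this
      have h4 : Real.sqrt p * (M / 2^(m+1)) + Real.sqrt p * (M / 2^m)
          = 3 * sp * (M / 2^(m+1)) := by
        rw [hsp]
        have : (2:ℝ)^(m+1) = 2 * 2^m := by ring
        rw [this]
        field_simp
        ring
      calc ‖cc (m+1) j - cc m j‖ ≤ ‖Θ j - cc (m+1) j‖ + ‖Θ j - cc m j‖ := h3
        _ ≤ Real.sqrt p * (M / 2^(m+1)) + Real.sqrt p * (M / 2^m) := add_le_add h1 h2
        _ = 3 * sp * (M / 2^(m+1)) := h4
    have hmid : ∀ m ∈ Finset.range n, |D (cc (m+1)) - D (cc m)| ≤ tm (m+1) := by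
      intro m hm
      have hnotin : ω ∉ Am m := by
        intro hin
        exact hBadω (Or.inr (Set.mem_biUnion hm hin))
      have hqmem : (cc (m+1), cc m) ∈ pairsF m := by
        rw [hpairsF, Finset.mem_filter, Finset.mem_product]
        exact ⟨⟨hcc1 (m+1), hcc1 m⟩, hdist2 m⟩
      have hnotin2 : ω ∉ Ev (cc (m+1)) (cc m) (tm (m+1)) := by
        intro hin
        exact hnotin (Set.mem_biUnion hqmem hin)
      rw [hEvdef] at hnotin2
      simp only [Set.mem_setOf_eq, not_le] at hnotin2
      rw [hDdiff (cc (m+1)) (cc m) (netT_mem_cube hM (hcc1 (m+1))) (netT_mem_cube hM (hcc1 m))]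
        at hnotin2
      exact hnotin2.le
    have hbase : |D (cc 0) - D Θstar| ≤ t0 := by
      have hnotin : ω ∉ A0 := fun hin => hBadω (Or.inl hin)
      have hnotin2 : ω ∉ Ev (cc 0) Θstar t0 := by
        intro hin
        exact hnotin (Set.mem_biUnion (hcc1 0) hin)
      rw [hEvdef] at hnotin2
      simp only [Set.mem_setOf_eq, not_le] at hnotin2
      rw [hDdiff (cc 0) Θstar (netT_mem_cube hM (hcc1 0)) hΘstarC] at hnotin2
      exact hnotin2.le
    have hlast : |D Θ - D (cc n)| ≤ 2 * (Γ1 * (sp * (M / 2^n))) := by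
      have hucube := netT_mem_cube hM (hcc1 n)
      have hcl : ∀ j, ‖Θ j - cc n j‖ ≤ sp * (M / 2^n) := by
        intro j
        refine le_trans (hcc2 n j) (le_of_eq ?_)
        rw [hsp]
      have hS : |(n:ℝ)⁻¹ * ∑ i ∈ Finset.range n, (f Θ (X i ω) - f (cc n) (X i ω))|
          ≤ Γ1 * (sp * (M / 2^n)) := by
        rw [abs_mul, abs_of_pos (by positivity : (0:ℝ) < (n:ℝ)⁻¹)]
        have h1 : |∑ i ∈ Finset.range n, (f Θ (X i ω) - f (cc n) (X i ω))|
            ≤ ∑ i ∈ Finset.range n, |f Θ (X i ω) - f (cc n) (X i ω)| :=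
          Finset.abs_sum_le_sum_abs _ _
        have h2 : ∑ i ∈ Finset.range n, |f Θ (X i ω) - f (cc n) (X i ω)|
            ≤ ∑ _i ∈ Finset.range n, Γ1 * (sp * (M / 2^n)) := by
          refine Finset.sum_le_sum fun i hi => ?_
          exact hlipf Θ (cc n) hΘc hucube (X i ω) (hXcube i hi) _ (by positivity) hcl
        rw [Finset.sum_const, Finset.card_range, nsmul_eq_mul] at h2
        calc (n:ℝ)⁻¹ * |∑ i ∈ Finset.range n, (f Θ (X i ω) - f (cc n) (X i ω))|
            ≤ (n:ℝ)⁻¹ * ((n:ℝ) * (Γ1 * (sp * (M / 2^n)))) := by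
              apply mul_le_mul_of_nonneg_left (le_trans h1 h2) (by positivity)
          _ = Γ1 * (sp * (M / 2^n)) := by field_simp
      have hI : |∫ x, (f Θ x - f (cc n) x) ∂P| ≤ Γ1 * (sp * (M / 2^n)) := by
        apply abs_integral_le hP
        intro x hx
        exact hlipf Θ (cc n) hΘc hucube x hx _ (by positivity) hcl
      have heq := hDdiff Θ (cc n) hΘc hucube
      have : D Θ - D (cc n) = (n:ℝ)⁻¹ * ∑ i ∈ Finset.range n, (f Θ (X i ω) - f (cc n) (X i ω))
          - ∫ x, (f Θ x - f (cc n) x) ∂P := heq.symm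
      rw [this]
      calc |(n:ℝ)⁻¹ * ∑ i ∈ Finset.range n, (f Θ (X i ω) - f (cc n) (X i ω))
            - ∫ x, (f Θ x - f (cc n) x) ∂P|
          ≤ |(n:ℝ)⁻¹ * ∑ i ∈ Finset.range n, (f Θ (X i ω) - f (cc n) (X i ω))|
            + |∫ x, (f Θ x - f (cc n) x) ∂P| := abs_sub _ _
        _ ≤ Γ1 * (sp * (M / 2^n)) + Γ1 * (sp * (M / 2^n)) := add_le_add hS hI
        _ = 2 * (Γ1 * (sp * (M / 2^n))) := by ring
    -- telescoping
    have htel : |D Θ - D Θstar| ≤ |D Θ - D (cc n)|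
        + (∑ m ∈ Finset.range n, |D (cc (m+1)) - D (cc m)|) + |D (cc 0) - D Θstar| := by
      have hsum : ∑ m ∈ Finset.range n, (D (cc (m+1)) - D (cc m)) = D (cc n) - D (cc 0) :=
        Finset.sum_range_sub (fun m => D (cc m)) n
      have hdec : D Θ - D Θstar = (D Θ - D (cc n))
          + (∑ m ∈ Finset.range n, (D (cc (m+1)) - D (cc m))) + (D (cc 0) - D Θstar) := by
        rw [hsum]; ring
      rw [hdec]
      refine le_trans (abs_add_le _ _) ?_
      refine add_le_add (le_trans (abs_add_le _ _) (add_le_add le_rfl ?_)) le_rfl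
      exact Finset.abs_sum_le_sum_abs _ _
    -- numeric bound
    have hsqrt_add : ∀ x y : ℝ, 0 ≤ x → 0 ≤ y →
        Real.sqrt (x + y) ≤ Real.sqrt x + Real.sqrt y := by
      intro x y hx hy
      have h1 : x + y ≤ (Real.sqrt x + Real.sqrt y)^2 := by
        nlinarith [Real.sq_sqrt hx, Real.sq_sqrt hy, Real.sqrt_nonneg x, Real.sqrt_nonneg y,
          mul_nonneg (Real.sqrt_nonneg x) (Real.sqrt_nonneg y)]
      have := Real.sqrt_le_sqrt h1
      rwa [Real.sqrt_sq (by positivity)] at this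
    have hsqrt_le_self : ∀ x : ℝ, 1 ≤ x → Real.sqrt x ≤ x := by
      intro x hx
      have h1 : x ≤ x^2 := by nlinarith
      have := Real.sqrt_le_sqrt h1
      rwa [Real.sqrt_sq (by linarith)] at this
    have hmidsum : ∑ m ∈ Finset.range n, tm (m+1)
        ≤ 3 * sp * M * Γ1 * (2 * Real.sqrt a + Real.sqrt cδ) / Real.sqrt n := by
      have hterm : ∀ m ∈ Finset.range n, tm (m+1)
          ≤ 3 * sp * M * Γ1 / Real.sqrt n
            * (Real.sqrt a * (((m:ℝ)+1) * (1/2)^(m+1)) + Real.sqrt cδ * (1/2)^(m+1)) := by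
        intro m _
        have hsq : Real.sqrt ((a * ((m+1:ℕ):ℝ) + cδ)/n)
            ≤ (Real.sqrt a * ((m:ℝ)+1) + Real.sqrt cδ) / Real.sqrt n := by
          rw [Real.sqrt_div (by positivity) (n:ℝ)]
          gcongr
          calc Real.sqrt (a * ((m+1:ℕ):ℝ) + cδ)
              ≤ Real.sqrt (a * ((m+1:ℕ):ℝ)) + Real.sqrt cδ :=
                hsqrt_add _ _ (by positivity) hcδ0.le
            _ ≤ Real.sqrt a * ((m:ℝ)+1) + Real.sqrt cδ := by
                have h1 : Real.sqrt (a * ((m+1:ℕ):ℝ))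
                    = Real.sqrt a * Real.sqrt ((m+1:ℕ):ℝ) := Real.sqrt_mul ha0.le _
                have h2 : Real.sqrt ((m+1:ℕ):ℝ) ≤ ((m:ℝ)+1) := by
                  have h3 : ((m+1:ℕ):ℝ) = (m:ℝ)+1 := by push_cast; ring
                  rw [h3]
                  refine hsqrt_le_self _ ?_
                  have : (0:ℝ) ≤ (m:ℝ) := Nat.cast_nonneg m
                  linarith
                rw [h1]
                have h4 : 0 ≤ Real.sqrt a := Real.sqrt_nonneg a
                nlinarith [Real.sqrt_nonneg ((m+1:ℕ):ℝ)]
        rw [htm]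
        simp only
        have hpow : (0:ℝ) < (1/2:ℝ)^(m+1) := by positivity
        calc 3 * sp * M * Γ1 * (1/2)^(m+1) * Real.sqrt ((a * ((m+1:ℕ):ℝ) + cδ)/n)
            ≤ 3 * sp * M * Γ1 * (1/2)^(m+1)
              * ((Real.sqrt a * ((m:ℝ)+1) + Real.sqrt cδ) / Real.sqrt n) := by
              apply mul_le_mul_of_nonneg_left hsq (by positivity)
          _ = 3 * sp * M * Γ1 / Real.sqrt n
              * (Real.sqrt a * (((m:ℝ)+1) * (1/2)^(m+1)) + Real.sqrt cδ * (1/2)^(m+1)) := by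
              field_simp
      refine le_trans (Finset.sum_le_sum hterm) ?_
      rw [← Finset.mul_sum]
      have hsplit : ∑ m ∈ Finset.range n,
          (Real.sqrt a * (((m:ℝ)+1) * (1/2)^(m+1)) + Real.sqrt cδ * (1/2)^(m+1))
          = Real.sqrt a * (∑ m ∈ Finset.range n, ((m:ℝ)+1) * (1/2)^(m+1))
            + Real.sqrt cδ * (∑ m ∈ Finset.range n, ((1:ℝ)/2)^(m+1)) := by
        rw [Finset.sum_add_distrib, Finset.mul_sum, Finset.mul_sum]
      rw [hsplit]
      have hb1 : Real.sqrt a * (∑ m ∈ Finset.range n, ((m:ℝ)+1) * (1/2)^(m+1))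
            + Real.sqrt cδ * (∑ m ∈ Finset.range n, ((1:ℝ)/2)^(m+1))
          ≤ Real.sqrt a * 2 + Real.sqrt cδ * 1 := by
        apply add_le_add
        · exact mul_le_mul_of_nonneg_left (ser1 n) (Real.sqrt_nonneg a)
        · exact mul_le_mul_of_nonneg_left (ser2 n) (Real.sqrt_nonneg cδ)
      calc 3 * sp * M * Γ1 / Real.sqrt n
            * (Real.sqrt a * (∑ m ∈ Finset.range n, ((m:ℝ)+1) * (1/2)^(m+1))
              + Real.sqrt cδ * (∑ m ∈ Finset.range n, ((1:ℝ)/2)^(m+1)))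
          ≤ 3 * sp * M * Γ1 / Real.sqrt n * (Real.sqrt a * 2 + Real.sqrt cδ * 1) := by
            apply mul_le_mul_of_nonneg_left hb1 (by positivity)
        _ = 3 * sp * M * Γ1 * (2 * Real.sqrt a + Real.sqrt cδ) / Real.sqrt n := by
            field_simp
    have hlast2 : 2 * (Γ1 * (sp * (M / 2^n))) ≤ 2 * sp * M * Γ1 / Real.sqrt n := by
      have h1 : Real.sqrt n ≤ 2^n := sqrt_le_two_pow n hn
      have h2 : M / 2^n ≤ M / Real.sqrt n := by
        apply div_le_div_of_nonneg_left hM.le hsn h1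
      calc 2 * (Γ1 * (sp * (M / 2^n))) ≤ 2 * (Γ1 * (sp * (M / Real.sqrt n))) := by
            apply mul_le_mul_of_nonneg_left _ (by norm_num)
            apply mul_le_mul_of_nonneg_left _ hΓ1pos.le
            apply mul_le_mul_of_nonneg_left h2 hsp0.le
        _ = 2 * sp * M * Γ1 / Real.sqrt n := by field_simp
    have hbase2 : t0 = 2 * sp * M * Γ1 * Real.sqrt cδ / Real.sqrt n := by
      rw [ht0, Real.sqrt_div hcδ0.le]
      ring
    have htotal : |D Θ - D Θstar| ≤ (C - 1) / Real.sqrt n := by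
      have h1 := le_trans htel (add_le_add (add_le_add (le_trans hlast hlast2)
        (le_trans (Finset.sum_le_sum hmid) hmidsum))
        (le_trans hbase (le_of_eq hbase2)))
      refine le_trans h1 (le_of_eq ?_)
      rw [hC]
      field_simp
      ring
    -- risk decomposition
    have hrisk : ∫ x, f Θ x ∂P - ∫ x, f Θstar x ∂P ≤ |D Θ - D Θstar| := by
      have e1 : D Θ = (n:ℝ)⁻¹ * ∑ i ∈ Finset.range n, f Θ (X i ω) - ∫ x, f Θ x ∂P := rfl
      have e2 : D Θstar = (n:ℝ)⁻¹ * ∑ i ∈ Finset.range n, f Θstar (X i ω)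
          - ∫ x, f Θstar x ∂P := rfl
      have h3 := neg_abs_le (D Θ - D Θstar)
      have h4 : D Θ - D Θstar
          = ((n:ℝ)⁻¹ * ∑ i ∈ Finset.range n, f Θ (X i ω) - ∫ x, f Θ x ∂P)
            - ((n:ℝ)⁻¹ * ∑ i ∈ Finset.range n, f Θstar (X i ω) - ∫ x, f Θstar x ∂P) := by
        rw [e1, e2]
      have h6 : ∫ x, f Θ x ∂P - ∫ x, f Θstar x ∂P
          = ((n:ℝ)⁻¹ * ∑ i ∈ Finset.range n, f Θ (X i ω)
            - (n:ℝ)⁻¹ * ∑ i ∈ Finset.range n, f Θstar (X i ω)) - (D Θ - D Θstar) := by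
        rw [h4]; ring
      rw [h6]
      have h7 : (n:ℝ)⁻¹ * ∑ i ∈ Finset.range n, f Θ (X i ω)
          - (n:ℝ)⁻¹ * ∑ i ∈ Finset.range n, f Θstar (X i ω) ≤ 0 := sub_nonpos.2 hemp
      generalize hgen : D Θ - D Θstar = dd at h3 ⊢
      generalize hgen2 : (n:ℝ)⁻¹ * ∑ i ∈ Finset.range n, f Θ (X i ω)
          - (n:ℝ)⁻¹ * ∑ i ∈ Finset.range n, f Θstar (X i ω) = ss at h7 ⊢
      linarith [h3, h7]
    have hfinal : ∫ x, f Θ x ∂P - ∫ x, f Θstar x ∂P ≤ (C - 1) / Real.sqrt n :=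
      le_trans hrisk htotal
    calc Real.sqrt n * (∫ x, f Θ x ∂P - ∫ x, f Θstar x ∂P)
        ≤ Real.sqrt n * ((C - 1) / Real.sqrt n) := by
          apply mul_le_mul_of_nonneg_left hfinal hsn.le
      _ = C - 1 := by field_simp
      _ ≤ C := by linarith
  -- wrap up
  set T : Set Ω := {ω : Ω | Real.sqrt n *
      (∫ x, f (Θhat n ω) x ∂P - ∫ x, f Θstar x ∂P) ≤ C} with hT
  have hsub : Tᶜ ⊆ Bad ∪ ({ω : Ω | ¬ ∀ i ∈ Finset.range n, X i ω ∈ cube p M}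
      ∪ {ω : Ω | ¬ ∀ nn : ℕ, 0 < nn →
        (∀ j, Θhat nn ω j ∈ cube p M) ∧
        ∀ Θ : Fin k → EuclideanSpace ℝ (Fin p), (∀ j, Θ j ∈ cube p M) →
          (nn : ℝ)⁻¹ * ∑ i ∈ Finset.range nn, f (Θhat nn ω) (X i ω) ≤
            (nn : ℝ)⁻¹ * ∑ i ∈ Finset.range nn, f Θ (X i ω)}) := by
    intro ω hω
    simp only [Set.mem_compl_iff, hT, Set.mem_setOf_eq, not_le] at hω
    by_cases h1 : ∀ i ∈ Finset.range n, X i ω ∈ cube p M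
    · by_cases h2 : ∀ nn : ℕ, 0 < nn →
          (∀ j, Θhat nn ω j ∈ cube p M) ∧
          ∀ Θ : Fin k → EuclideanSpace ℝ (Fin p), (∀ j, Θ j ∈ cube p M) →
            (nn : ℝ)⁻¹ * ∑ i ∈ Finset.range nn, f (Θhat nn ω) (X i ω) ≤
              (nn : ℝ)⁻¹ * ∑ i ∈ Finset.range nn, f Θ (X i ω)
      · rcases em (ω ∈ Bad) with hB | hB
        · exact Or.inl hB
        · obtain ⟨hΘc, hmin⟩ := h2 n (by omega)
          exact absurd (hdet ω h1 hΘc (hmin Θstar hΘstarC) hB) (not_le.2 hω)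
      · exact Or.inr (Or.inr h2)
    · exact Or.inr (Or.inl h1)
  have hcompl : ℙ Tᶜ ≤ ENNReal.ofReal δ := by
    refine le_trans (measure_mono hsub) ?_
    refine le_trans (measure_union_le _ _) ?_
    have h2 : ℙ ({ω : Ω | ¬ ∀ i ∈ Finset.range n, X i ω ∈ cube p M}
        ∪ {ω : Ω | ¬ ∀ nn : ℕ, 0 < nn →
          (∀ j, Θhat nn ω j ∈ cube p M) ∧
          ∀ Θ : Fin k → EuclideanSpace ℝ (Fin p), (∀ j, Θ j ∈ cube p M) →
            (nn : ℝ)⁻¹ * ∑ i ∈ Finset.range nn, f (Θhat nn ω) (X i ω) ≤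
              (nn : ℝ)⁻¹ * ∑ i ∈ Finset.range nn, f Θ (X i ω)}) = 0 := by
      refine measure_union_null hNullE ?_
      exact hNullH
    calc ℙ Bad + ℙ ({ω : Ω | ¬ ∀ i ∈ Finset.range n, X i ω ∈ cube p M}
          ∪ {ω : Ω | ¬ ∀ nn : ℕ, 0 < nn →
            (∀ j, Θhat nn ω j ∈ cube p M) ∧
            ∀ Θ : Fin k → EuclideanSpace ℝ (Fin p), (∀ j, Θ j ∈ cube p M) →
              (nn : ℝ)⁻¹ * ∑ i ∈ Finset.range nn, f (Θhat nn ω) (X i ω) ≤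
                (nn : ℝ)⁻¹ * ∑ i ∈ Finset.range nn, f Θ (X i ω)})
        ≤ ENNReal.ofReal δ + 0 := by
          rw [h2]
          exact add_le_add hBadbd le_rfl
      _ = ENNReal.ofReal δ := by rw [add_zero]
  have huniv : (1:ℝ≥0∞) ≤ ℙ T + ℙ Tᶜ := by
    calc (1:ℝ≥0∞) = ℙ (Set.univ : Set Ω) := (measure_univ).symm
      _ = ℙ (T ∪ Tᶜ) := by rw [Set.union_compl_self]
      _ ≤ ℙ T + ℙ Tᶜ := measure_union_le _ _
  have h9 : (1:ℝ≥0∞) ≤ ℙ T + ENNReal.ofReal δ :=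
    le_trans huniv (add_le_add_right hcompl _)
  have h10 : ENNReal.ofReal (1 - δ) + ENNReal.ofReal δ ≤ ℙ T + ENNReal.ofReal δ := by
    rw [← ENNReal.ofReal_add (by linarith) hδ0.le]
    rw [show (1 - δ) + δ = 1 by ring]
    rw [ENNReal.ofReal_one]
    exact h9
  exact (ENNReal.add_le_add_iff_right ENNReal.ofReal_ne_top).1 h10
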